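/- Let w = w₁⋯w_n be a partial permutation in a well-nested family, and suppose i,j,k,l ∈ [n] are indices such that (w_i, w_j) and (w_k, w_l) are both in NDes(w), with w_i < w_k and w_j < w_l. Then i < j < k < l. -/

import Mathlib

/-- One step of the word relation `≾`. -/
def PrecStep (x y : List ℤ) : Prop :=
  ∃ u v : List ℤ, ∃ A B C : ℤ, A < B ∧ B < C ∧
    x = u ++ [B, C, A] ++ v ∧ y = u ++ [C, A, B] ++ v

/-- A word has a consecutive 321-pattern if three consecutive letters strictly
decrease. -/
def Has321 (w : List ℤ) : Prop :=
  ∃ u v : List ℤ, ∃ a b c : ℤ, w = u ++ [a, b, c] ++ v ∧ b < a ∧ c < b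

/-- A well-nested family of partial permutations. -/
def WellNested (E : Set (List ℤ)) : Prop :=
  (∀ w ∈ E, w.Nodup) ∧ (∀ x y, PrecStep x y → (x ∈ E ↔ y ∈ E)) ∧
    (∀ w ∈ E, ¬Has321 w)

/-- symmetric one-step relation -/
def MStep (x y : List ℤ) : Prop := PrecStep x y ∨ PrecStep y x

/-- reachability by moves -/
def Reach : List ℤ → List ℤ → Prop := Relation.ReflTransGen MStep

/-- every reachable word is 321-free -/
def Good (w : List ℤ) : Prop := ∀ z, Reach w z → ¬ Has321 z

lemma reach_refl (w : List ℤ) : Reach w w := Relation.ReflTransGen.refl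

lemma reach_trans {a b c : List ℤ} (h : Reach a b) (h' : Reach b c) : Reach a c :=
  Relation.ReflTransGen.trans h h'

lemma mstep_symm {a b : List ℤ} (h : MStep a b) : MStep b a := h.symm

lemma reach_symm {a b : List ℤ} (h : Reach a b) : Reach b a := by
  induction h with
  | refl => exact reach_refl _
  | tail _ h2 ih => exact reach_trans (Relation.ReflTransGen.single h2.symm) ih

lemma reach_fwd (γ δ : List ℤ) {A B C : ℤ} (h1 : A < B) (h2 : B < C) :
    Reach (γ ++ B :: C :: A :: δ) (γ ++ C :: A :: B :: δ) :=
  Relation.ReflTransGen.single (Or.inl ⟨γ, δ, A, B, C, h1, h2, by simp, by simp⟩)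

lemma reach_bwd (γ δ : List ℤ) {A B C : ℤ} (h1 : A < B) (h2 : B < C) :
    Reach (γ ++ C :: A :: B :: δ) (γ ++ B :: C :: A :: δ) :=
  reach_symm (reach_fwd γ δ h1 h2)

lemma good_reach {w z : List ℤ} (h : Good w) (hz : Reach w z) : Good z :=
  fun y hy => h y (reach_trans hz hy)

lemma good_not321 {w : List ℤ} (h : Good w) : ¬ Has321 w := h w (reach_refl w)

lemma has321_of (γ δ : List ℤ) {c1 c2 c3 : ℤ} (h1 : c2 < c1) (h2 : c3 < c2) :
    Has321 (γ ++ c1 :: c2 :: c3 :: δ) := ⟨γ, δ, c1, c2, c3, by simp, h1, h2⟩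

lemma precStep_perm {x y : List ℤ} (h : PrecStep x y) : x.Perm y := by
  obtain ⟨u, v, A, B, C, _, _, rfl, rfl⟩ := h
  refine List.Perm.append_right v ?_
  refine List.Perm.append_left u ?_
  have h1 : List.Perm ([B, C, A] : List ℤ) [C, B, A] := List.Perm.swap' _ _ (List.Perm.refl _)
  have h2 : List.Perm ([C, B, A] : List ℤ) [C, A, B] := List.Perm.cons C (List.Perm.swap' _ _ (List.Perm.refl _))
  exact h1.trans h2
lemma reach_perm {x y : List ℤ} (h : Reach x y) : x.Perm y := by
  induction h with
  | refl => exact List.Perm.refl _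
  | tail _ h2 ih =>
      rcases h2 with h2 | h2
      · exact ih.trans (precStep_perm h2)
      · exact ih.trans (precStep_perm h2).symm

lemma good_of_wellNested {E : Set (List ℤ)} (hE : WellNested E) {w : List ℤ} (hw : w ∈ E) :
    Good w := by
  intro z hz
  have hmem : z ∈ E := by
    induction hz with
    | refl => exact hw
    | tail _ h2 ih =>
        rcases h2 with h2 | h2
        · exact (hE.2.1 _ _ h2).mp ih
        · exact (hE.2.1 _ _ h2).mpr ih
  exact hE.2.2 z hmem

/-- Split a word at its first descent. -/
def splitFirstDesc : List ℤ → Option (List ℤ × ℤ × ℤ × List ℤ)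
  | [] => none
  | [_] => none
  | a :: b :: rest =>
    if b < a then some ([], a, b, rest)
    else
      match splitFirstDesc (b :: rest) with
      | none => none
      | some (p, x, y, s) => some (a :: p, x, y, s)

/-- Fueled computation of the nested descent set. -/
def ndesAux : ℕ → List ℤ → Finset (ℤ × ℤ)
  | 0, _ => ∅
  | fuel + 1, w =>
    match splitFirstDesc w with
    | none => ∅
    | some (p, x, y, s) => insert (x, y) (ndesAux fuel (p ++ s))

/-- The nested descent set `NDes(w)`. -/
def ndes (w : List ℤ) : Finset (ℤ × ℤ) := ndesAux w.length w

lemma sfd_spec : ∀ {w u : List ℤ} {a b : ℤ} {v : List ℤ},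
    splitFirstDesc w = some (u, a, b, v) →
    w = u ++ a :: b :: v ∧ b < a ∧ List.IsChain (· ≤ ·) (u ++ [a])
  | [], _, _, _, _, h => by simp [splitFirstDesc] at h
  | [x], _, _, _, _, h => by simp [splitFirstDesc] at h
  | x :: y :: r, u, a, b, v, h => by
    rw [splitFirstDesc] at h
    by_cases hxy : y < x
    · rw [if_pos hxy] at h
      simp only [Option.some.injEq, Prod.mk.injEq] at h
      obtain ⟨h1, h2, h3, h4⟩ := h
      subst h1; subst h2; subst h3; subst h4
      exact ⟨by simp, hxy, by simp⟩
    · rw [if_neg hxy] at h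
      rcases hs : splitFirstDesc (y :: r) with _ | ⟨p, c, d, s⟩
      · rw [hs] at h; simp at h
      · rw [hs] at h
        simp only [Option.some.injEq, Prod.mk.injEq] at h
        obtain ⟨h1, h2, h3, h4⟩ := h
        subst h1; subst h2; subst h3; subst h4
        obtain ⟨e1, e2, e3⟩ := sfd_spec hs
        refine ⟨by rw [List.cons_append, ← e1], e2, ?_⟩
        rw [List.cons_append]
        rcases p with _ | ⟨p0, pr⟩
        · have hya : y = c := by
            have h0 := e1; simp only [List.nil_append] at h0
            exact ((List.cons.injEq _ _ _ _).mp h0).1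
          simp only [List.nil_append]
          have hxa : x ≤ c := not_lt.mp (hya ▸ hxy)
          simp [List.isChain_cons_cons, hxa]
        · have hyp : y = p0 := by
            have h0 := e1; simp only [List.cons_append] at h0
            exact ((List.cons.injEq _ _ _ _).mp h0).1
          have hxp : x ≤ p0 := not_lt.mp (hyp ▸ hxy)
          rw [List.cons_append, List.isChain_cons]
          refine ⟨?_, e3⟩
          intro z hz
          simp only [List.cons_append, List.head?_cons, Option.mem_def,
            Option.some.injEq] at hz
          omega

/-- determinism direction -/
lemma sfd_of (u : List ℤ) {a b : ℤ} (v : List ℤ) (hba : b < a)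
    (hch : List.IsChain (· ≤ ·) (u ++ [a])) :
    splitFirstDesc (u ++ a :: b :: v) = some (u, a, b, v) := by
  induction u with
  | nil => simp [splitFirstDesc, hba]
  | cons x u ih =>
      rcases u with _ | ⟨y, u'⟩
      · simp only [List.nil_append] at *
        have hxa : x ≤ a := by simpa using hch
        rw [List.cons_append, List.nil_append]
        simp [splitFirstDesc, not_lt.mpr hxa, hba]
      · have hch' : List.IsChain (· ≤ ·) ((y :: u') ++ [a]) := by
          rw [List.cons_append, List.isChain_cons] at hch
          exact hch.2
        have hxy : x ≤ y := by
          rw [List.cons_append, List.isChain_cons] at hch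
          exact hch.1 y (by simp)
        rw [List.cons_append]
        rw [show (y :: u') ++ a :: b :: v = y :: (u' ++ a :: b :: v) by simp] at ih ⊢
        rw [show splitFirstDesc (x :: y :: (u' ++ a :: b :: v)) =
            match splitFirstDesc (y :: (u' ++ a :: b :: v)) with
            | none => none
            | some (p, c, d, s) => some (x :: p, c, d, s) by
          simp [splitFirstDesc, not_lt.mpr hxy]]
        rw [ih hch']

lemma sfd_none_of_ndes_ne {w : List ℤ} (h : ndes w ≠ ∅) :
    ∃ u a b v, splitFirstDesc w = some (u, a, b, v) := by
  rcases hs : splitFirstDesc w with _ | ⟨u, a, b, v⟩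
  · exfalso; apply h
    unfold ndes
    rcases hl : w.length with _ | n
    · rw [ndesAux]
    · rw [ndesAux, hs]
  · exact ⟨u, a, b, v, rfl⟩

lemma ndesAux_succ_some {n : ℕ} {w u : List ℤ} {a b : ℤ} {v : List ℤ}
    (hs : splitFirstDesc w = some (u, a, b, v)) :
    ndesAux (n + 1) w = insert (a, b) (ndesAux n (u ++ v)) := by
  rw [ndesAux, hs]

lemma ndesAux_stable : ∀ (f : ℕ) (w : List ℤ), w.length ≤ f → ndesAux f w = ndes w := by
  intro f
  induction f using Nat.strong_induction_on with
  | _ f ih =>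
    rcases f with _ | n
    · intro w hw
      have : w = [] := List.length_eq_zero_iff.mp (Nat.le_zero.mp hw)
      subst this; rfl
    · intro w hw
      rcases hs : splitFirstDesc w with _ | ⟨u, a, b, v⟩
      · unfold ndes
        rcases hl : w.length with _ | m
        · rw [ndesAux, ndesAux, hs]
        · rw [ndesAux, ndesAux, hs]
      · obtain ⟨e1, _, _⟩ := sfd_spec hs
        have hlen : w.length = (u ++ v).length + 2 := by
          subst e1; simp; ring
        rw [ndesAux_succ_some hs, ih n (by omega) _ (by omega)]
        conv_rhs => rw [ndes, hlen]
        rw [ndesAux_succ_some hs,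
          ih ((u ++ v).length + 1) (by omega) _ (by omega)]

lemma ndes_eq {w u : List ℤ} {a b : ℤ} {v : List ℤ}
    (hs : splitFirstDesc w = some (u, a, b, v)) :
    ndes w = insert (a, b) (ndes (u ++ v)) := by
  obtain ⟨e1, _, _⟩ := sfd_spec hs
  have hlen : w.length = (u ++ v).length + 2 := by subst e1; simp; ring
  conv_lhs => rw [ndes, hlen]
  rw [ndesAux_succ_some hs, ndesAux_stable _ _ (by omega)]

/-! ### sublist and ndes membership lemmas -/

lemma ndes_sub_aux : ∀ (n : ℕ) (w : List ℤ), w.length = n → ∀ {x y : ℤ},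
    (x, y) ∈ ndes w → [x, y].Sublist w ∧ y < x := by
  intro n
  induction n using Nat.strong_induction_on with
  | _ n ih =>
    intro w hn x y hm
    have hne : ndes w ≠ ∅ := by
      intro h; rw [h] at hm; exact absurd hm (Finset.notMem_empty _)
    obtain ⟨u, a, b, v, hs⟩ := sfd_none_of_ndes_ne hne
    obtain ⟨e1, e2, e3⟩ := sfd_spec hs
    rw [ndes_eq hs] at hm
    rcases Finset.mem_insert.mp hm with h | h
    · have hx : x = a := ((Prod.mk.injEq _ _ _ _).mp h).1
      have hy : y = b := ((Prod.mk.injEq _ _ _ _).mp h).2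
      subst hx; subst hy
      refine ⟨?_, e2⟩
      rw [e1]
      refine List.Sublist.trans ?_ (List.sublist_append_right u _)
      exact (List.cons_sublist_cons).mpr ((List.cons_sublist_cons).mpr (List.nil_sublist v))
    · have hlen : (u ++ v).length < n := by
        subst e1; simp at hn ⊢; omega
      obtain ⟨hsub, hlt⟩ := ih _ hlen (u ++ v) rfl h
      refine ⟨hsub.trans ?_, hlt⟩
      rw [e1]
      exact List.Sublist.append_left
        (List.sublist_cons_of_sublist a (List.sublist_cons_of_sublist b (List.Sublist.refl v))) u

lemma ndes_sub {w : List ℤ} {x y : ℤ} (hm : (x, y) ∈ ndes w) :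
    [x, y].Sublist w ∧ y < x := ndes_sub_aux w.length w rfl hm

lemma mid_sublist (u : List ℤ) (a b : ℤ) (v : List ℤ) :
    (u ++ v).Sublist (u ++ a :: b :: v) :=
  List.Sublist.append_left
    (List.sublist_cons_of_sublist a (List.sublist_cons_of_sublist b (List.Sublist.refl v))) u

lemma idx_lt_of_pair_sublist : ∀ (w : List ℤ) {s t : ℤ}, w.Nodup → [s, t].Sublist w →
    ∀ (i j : ℕ) (hi : i < w.length) (hj : j < w.length),
      w.get ⟨i, hi⟩ = s → w.get ⟨j, hj⟩ = t → i < j := by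
  intro w
  induction w with
  | nil => intro s t _ hsub; simp at hsub
  | cons c w ih =>
    intro s t hnd hsub i j hi hj hgi hgj
    have hndw : w.Nodup := (List.nodup_cons.mp hnd).2
    have hcw : c ∉ w := (List.nodup_cons.mp hnd).1
    cases hsub with
    | cons _ hsub =>
      -- [s, t] <+ w
      have hsw : s ∈ w := hsub.subset (by simp)
      have htw : t ∈ w := hsub.subset (by simp)
      rcases i with _ | i'
      · exfalso; apply hcw; rw [show c = s from hgi]; exact hsw
      · rcases j with _ | j'
        · exfalso; apply hcw; rw [show c = t from hgj]; exact htw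
        · have := ih hndw hsub i' j' (by simpa using hi) (by simpa using hj)
            (by simpa using hgi) (by simpa using hgj)
          omega
    | cons_cons _ hsub =>
      -- s = c, [t] <+ w
      have htw : t ∈ w := hsub.subset (by simp)
      rcases j with _ | j'
      · exfalso; apply hcw; rw [show c = t from hgj]; exact htw
      · rcases i with _ | i'
        · omega
        · exfalso; apply hcw
          have hsw : (w.get ⟨i', by simpa using hi⟩) = c := by simpa using hgi
          rw [← hsw]
          exact List.get_mem w _

section SEC4

lemma split3 {α β γ δ : List ℤ} {t1 t2 t3 : ℤ} (h : α ++ β = γ ++ t1 :: t2 :: t3 :: δ) :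
    (∃ ρ, α = γ ++ t1 :: t2 :: t3 :: ρ ∧ δ = ρ ++ β) ∨
    (∃ ρ, γ = α ++ ρ ∧ β = ρ ++ t1 :: t2 :: t3 :: δ) ∨
    (α = γ ++ [t1] ∧ β = t2 :: t3 :: δ) ∨
    (α = γ ++ [t1, t2] ∧ β = t3 :: δ) := by
  rcases List.append_eq_append_iff.mp h with ⟨ρ, hγ, hβ⟩ | ⟨ρ, hα, hX⟩
  · exact Or.inr (Or.inl ⟨ρ, hγ, hβ⟩)
  · rcases ρ with _ | ⟨x1, ρ⟩
    · refine Or.inr (Or.inl ⟨[], by simp [hα], by simpa using hX.symm⟩)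
    · rcases ρ with _ | ⟨x2, ρ⟩
      · obtain ⟨e1, e2⟩ := (List.cons.injEq _ _ _ _).mp hX
        exact Or.inr (Or.inr (Or.inl ⟨by rw [hα, e1], e2.symm⟩))
      · rcases ρ with _ | ⟨x3, ρ⟩
        · obtain ⟨e1, hX⟩ := (List.cons.injEq _ _ _ _).mp hX
          obtain ⟨e2, e3⟩ := (List.cons.injEq _ _ _ _).mp hX
          exact Or.inr (Or.inr (Or.inr ⟨by rw [hα, e1, e2], e3.symm⟩))
        · obtain ⟨e1, hX⟩ := (List.cons.injEq _ _ _ _).mp hX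
          obtain ⟨e2, hX⟩ := (List.cons.injEq _ _ _ _).mp hX
          obtain ⟨e3, hX⟩ := (List.cons.injEq _ _ _ _).mp hX
          exact Or.inl ⟨ρ, by rw [hα, e1, e2, e3], hX⟩

lemma nodup5 {γ δ : List ℤ} {p q r s t : ℤ} (h : (γ ++ p :: q :: r :: s :: t :: δ).Nodup) :
    p ≠ q ∧ p ≠ r ∧ p ≠ s ∧ p ≠ t ∧ q ≠ r ∧ q ≠ s ∧ q ≠ t ∧ r ≠ s ∧ r ≠ t ∧ s ≠ t := by
  have hsub : ([p, q, r, s, t] : List ℤ).Sublist (γ ++ p :: q :: r :: s :: t :: δ) := by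
    refine List.Sublist.trans ?_ (List.sublist_append_right γ _)
    exact List.cons_sublist_cons.mpr (List.cons_sublist_cons.mpr
      (List.cons_sublist_cons.mpr (List.cons_sublist_cons.mpr
        (List.cons_sublist_cons.mpr (List.nil_sublist δ)))))
  have h5 : ([p, q, r, s, t] : List ℤ).Nodup := hsub.nodup h
  simp only [List.nodup_cons, List.mem_cons, List.mem_singleton, List.not_mem_nil,
    not_or, List.nodup_nil, and_true] at h5
  tauto

end SEC4

section SEC5

/-- window lemma: pair after first letter of triple, forward move -/
lemma win_pos1_fwd {γ δ : List ℤ} {a b A B C : ℤ} (hba : b < a) (hAB : A < B) (hBC : B < C)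
    (hnd : (γ ++ B :: a :: b :: C :: A :: δ).Nodup)
    (hG : Good (γ ++ B :: a :: b :: C :: A :: δ)) :
    ∃ α' β' : List ℤ, γ ++ C :: A :: B :: δ = α' ++ β' ∧
      Reach (γ ++ B :: a :: b :: C :: A :: δ) (α' ++ a :: b :: β') := by
  obtain ⟨hBa, hBb, hBC', hBA, hab', haC, haA, hbC, hbA, hCA⟩ := nodup5 hnd
  rcases lt_or_gt_of_ne hbC with h1 | h1
  · -- b < C
    rcases lt_or_gt_of_ne hBb with h2 | h2
    · -- B < b : window leaf 2
      have m1 : Reach (γ ++ B :: a :: b :: C :: A :: δ) (γ ++ B :: a :: C :: A :: b :: δ) := by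
        simpa using reach_fwd (γ ++ [B, a]) δ (show A < b by omega) h1
      rcases lt_or_gt_of_ne haC with h3 | h3
      · -- a < C
        have m2 : Reach (γ ++ B :: a :: C :: A :: b :: δ) (γ ++ B :: C :: A :: a :: b :: δ) := by
          simpa using reach_fwd (γ ++ [B]) (b :: δ) (show A < a by omega) h3
        have m3 : Reach (γ ++ B :: C :: A :: a :: b :: δ) (γ ++ C :: A :: B :: a :: b :: δ) := by
          simpa using reach_fwd γ (a :: b :: δ) hAB hBC
        exact ⟨γ ++ [C, A, B], δ, by simp, by simpa using reach_trans m1 (reach_trans m2 m3)⟩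
      · -- C < a : 321 (a, C, A) after m1
        exact absurd (has321_of (γ ++ [B]) (b :: δ) h3 (show A < C by omega) :
            Has321 (γ ++ [B] ++ a :: C :: A :: b :: δ))
          (by simpa using good_not321 (good_reach hG m1))
    · -- b < B
      rcases lt_or_gt_of_ne hBa with h3 | h3
      · -- B < a : leaf 3
        have m1 : Reach (γ ++ B :: a :: b :: C :: A :: δ) (γ ++ a :: b :: B :: C :: A :: δ) := by
          simpa using reach_fwd γ (C :: A :: δ) h2 h3
        have m2 : Reach (γ ++ a :: b :: B :: C :: A :: δ) (γ ++ a :: b :: C :: A :: B :: δ) := by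
          simpa using reach_fwd (γ ++ [a, b]) δ hAB hBC
        exact ⟨γ, C :: A :: B :: δ, by simp, m1.trans m2⟩
      · -- a < B : 321 (B, a, b)
        exact absurd (has321_of γ (C :: A :: δ) h3 hba)
          (by simpa using good_not321 hG)
  · -- C < b : 321 (a, b, C)
    exact absurd (has321_of (γ ++ [B]) (A :: δ) hba h1 :
        Has321 (γ ++ [B] ++ a :: b :: C :: A :: δ))
      (by simpa using good_not321 hG)

/-- window lemma: pair after first letter of triple, backward move -/
lemma win_pos1_bwd {γ δ : List ℤ} {a b A B C : ℤ} (hba : b < a) (hAB : A < B) (hBC : B < C)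
    (hnd : (γ ++ C :: a :: b :: A :: B :: δ).Nodup)
    (hG : Good (γ ++ C :: a :: b :: A :: B :: δ)) :
    ∃ α' β' : List ℤ, γ ++ B :: C :: A :: δ = α' ++ β' ∧
      Reach (γ ++ C :: a :: b :: A :: B :: δ) (α' ++ a :: b :: β') := by
  obtain ⟨hCa, hCb, hCA, hCB, hab', haA, haB, hbA, hbB, hAB'⟩ := nodup5 hnd
  rcases lt_or_gt_of_ne hCa with h1 | h1
  · -- C < a
    rcases lt_or_gt_of_ne hCb with h2 | h2
    · -- C < b : 321 (a, b, A)
      exact absurd (has321_of (γ ++ [C]) (B :: δ) hba (show A < b by omega) :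
          Has321 (γ ++ [C] ++ a :: b :: A :: B :: δ))
        (by simpa using good_not321 hG)
    · -- b < C
      have m1 : Reach (γ ++ C :: a :: b :: A :: B :: δ) (γ ++ a :: b :: C :: A :: B :: δ) := by
        simpa using reach_fwd γ (A :: B :: δ) h2 h1
      have m2 : Reach (γ ++ a :: b :: C :: A :: B :: δ) (γ ++ a :: b :: B :: C :: A :: δ) := by
        simpa using reach_bwd (γ ++ [a, b]) δ hAB hBC
      exact ⟨γ, B :: C :: A :: δ, by simp, m1.trans m2⟩
  · -- a < C : 321 (C, a, b)
    exact absurd (has321_of γ (A :: B :: δ) h1 hba) (by simpa using good_not321 hG)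

/-- window lemma: pair after second letter of triple, forward move -/
lemma win_pos2_fwd {γ δ : List ℤ} {a b A B C : ℤ} (hba : b < a) (hAB : A < B) (hBC : B < C)
    (hnd : (γ ++ B :: C :: a :: b :: A :: δ).Nodup)
    (hG : Good (γ ++ B :: C :: a :: b :: A :: δ)) :
    ∃ α' β' : List ℤ, γ ++ C :: A :: B :: δ = α' ++ β' ∧
      Reach (γ ++ B :: C :: a :: b :: A :: δ) (α' ++ a :: b :: β') := by
  obtain ⟨hBC', hBa, hBb, hBA, hCa, hCb, hCA, hab', haA, hbA⟩ := nodup5 hnd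
  rcases lt_or_gt_of_ne hCa with h1 | h1
  · -- C < a
    rcases lt_or_gt_of_ne hbA with h2 | h2
    · -- b < A
      have m1 : Reach (γ ++ B :: C :: a :: b :: A :: δ) (γ ++ B :: C :: A :: a :: b :: δ) := by
        simpa using reach_bwd (γ ++ [B, C]) δ h2 (show A < a by omega)
      have m2 : Reach (γ ++ B :: C :: A :: a :: b :: δ) (γ ++ C :: A :: B :: a :: b :: δ) := by
        simpa using reach_fwd γ (a :: b :: δ) hAB hBC
      exact ⟨γ ++ [C, A, B], δ, by simp, by simpa using reach_trans m1 m2⟩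
    · -- A < b : 321 (a, b, A)
      exact absurd (has321_of (γ ++ [B, C]) δ hba h2 :
          Has321 (γ ++ [B, C] ++ a :: b :: A :: δ))
        (by simpa using good_not321 hG)
  · -- a < C : 321 (C, a, b)
    exact absurd (has321_of (γ ++ [B]) (A :: δ) h1 hba :
        Has321 (γ ++ [B] ++ C :: a :: b :: A :: δ))
      (by simpa using good_not321 hG)

/-- window lemma: pair after second letter of triple, backward move -/
lemma win_pos2_bwd {γ δ : List ℤ} {a b A B C : ℤ} (hba : b < a) (hAB : A < B) (hBC : B < C)
    (hnd : (γ ++ C :: A :: a :: b :: B :: δ).Nodup)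
    (hG : Good (γ ++ C :: A :: a :: b :: B :: δ)) :
    ∃ α' β' : List ℤ, γ ++ B :: C :: A :: δ = α' ++ β' ∧
      Reach (γ ++ C :: A :: a :: b :: B :: δ) (α' ++ a :: b :: β') := by
  obtain ⟨hCA, hCa, hCb, hCB, hAa, hAb, hAB', hab', haB, hbB⟩ := nodup5 hnd
  rcases lt_or_gt_of_ne hCb with h1 | h1
  · -- C < b : 321 (a, b, B)
    exact absurd (has321_of (γ ++ [C, A]) δ hba (show B < b by omega) :
        Has321 (γ ++ [C, A] ++ a :: b :: B :: δ))
      (by simpa using good_not321 hG)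
  · -- b < C
    rcases lt_or_gt_of_ne hCa with h2 | h2
    · -- C < a
      rcases lt_or_gt_of_ne hbB with h3 | h3
      · -- b < B
        have m1 : Reach (γ ++ C :: A :: a :: b :: B :: δ) (γ ++ C :: A :: B :: a :: b :: δ) := by
          simpa using reach_bwd (γ ++ [C, A]) δ h3 (show B < a by omega)
        have m2 : Reach (γ ++ C :: A :: B :: a :: b :: δ) (γ ++ B :: C :: A :: a :: b :: δ) := by
          simpa using reach_bwd γ (a :: b :: δ) hAB hBC
        exact ⟨γ ++ [B, C, A], δ, by simp, by simpa using reach_trans m1 m2⟩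
      · -- B < b : 321 (a, b, B)
        exact absurd (has321_of (γ ++ [C, A]) δ hba h3 :
            Has321 (γ ++ [C, A] ++ a :: b :: B :: δ))
          (by simpa using good_not321 hG)
    · -- a < C
      rcases lt_or_gt_of_ne hAb with h3 | h3
      · -- A < b : three backward moves
        have m1 : Reach (γ ++ C :: A :: a :: b :: B :: δ)
            (γ ++ a :: C :: A :: b :: B :: δ) := by
          simpa using reach_bwd γ (b :: B :: δ) (show A < a by omega) h2
        have m2 : Reach (γ ++ a :: C :: A :: b :: B :: δ)
            (γ ++ a :: b :: C :: A :: B :: δ) := by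
          simpa using reach_bwd (γ ++ [a]) (B :: δ) h3 h1
        have m3 : Reach (γ ++ a :: b :: C :: A :: B :: δ)
            (γ ++ a :: b :: B :: C :: A :: δ) := by
          simpa using reach_bwd (γ ++ [a, b]) δ hAB hBC
        exact ⟨γ, B :: C :: A :: δ, by simp, m1.trans (m2.trans m3)⟩
      · -- b < A
        rcases lt_or_gt_of_ne hAa with h4 | h4
        · -- A < a : one forward move then 321 (C, a, b)
          have m1 : Reach (γ ++ C :: A :: a :: b :: B :: δ)
              (γ ++ C :: a :: b :: A :: B :: δ) := by
            simpa using reach_fwd (γ ++ [C]) (B :: δ) h3 h4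
          exact absurd (has321_of γ (A :: B :: δ) h2 hba)
            (by simpa using good_not321 (good_reach hG m1))
        · -- a < A : 321 (A, a, b)
          exact absurd (has321_of (γ ++ [C]) (B :: δ) h4 hba :
              Has321 (γ ++ [C] ++ A :: a :: b :: B :: δ))
            (by simpa using good_not321 hG)

end SEC5

section SEC6

lemma adjDel {α β : List ℤ} {a b : ℤ} (hba : b < a)
    (hnd : (α ++ a :: b :: β).Nodup) (hG : Good (α ++ a :: b :: β)) :
    Good (α ++ β) := by
  have sim : ∀ z, Reach (α ++ β) z →
      ∃ α' β', z = α' ++ β' ∧ Reach (α ++ a :: b :: β) (α' ++ a :: b :: β') := by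
    intro z hz
    induction hz with
    | refl => exact ⟨α, β, rfl, reach_refl _⟩
    | tail hr hstep ih =>
      obtain ⟨α', β', rfl, hζ⟩ := ih
      rcases hstep with hf | hbk
      · obtain ⟨γ, δ, A, B, C, hAB, hBC, he, rfl⟩ := hf
        rcases split3 (by simpa using he) with ⟨ρ, rfl, rfl⟩ | ⟨ρ, rfl, rfl⟩ |
          ⟨rfl, rfl⟩ | ⟨rfl, rfl⟩
        · -- move inside α'
          refine ⟨γ ++ C :: A :: B :: ρ, β', by simp, ?_⟩
          have h2 := reach_fwd γ (ρ ++ a :: b :: β') hAB hBC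
          simp only [List.cons_append, List.append_assoc, List.nil_append] at hζ h2 ⊢
          exact reach_trans hζ h2
        · -- move inside β'
          refine ⟨α', ρ ++ C :: A :: B :: δ, by simp, ?_⟩
          have h2 := reach_fwd (α' ++ a :: b :: ρ) δ hAB hBC
          simp only [List.cons_append, List.append_assoc, List.nil_append] at hζ h2 ⊢
          exact reach_trans hζ h2
        · -- window pos1, forward
          have hζn : Reach (α ++ a :: b :: β) (γ ++ B :: a :: b :: C :: A :: δ) := by
            simpa using hζ
          have hnd' : (γ ++ B :: a :: b :: C :: A :: δ).Nodup :=
            ((reach_perm hζn).nodup_iff).mp hnd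
          obtain ⟨α'', β'', heq, hmv⟩ :=
            win_pos1_fwd hba hAB hBC hnd' (good_reach hG hζn)
          exact ⟨α'', β'', by simpa using heq, reach_trans hζn hmv⟩
        · -- window pos2, forward
          have hζn : Reach (α ++ a :: b :: β) (γ ++ B :: C :: a :: b :: A :: δ) := by
            simpa using hζ
          have hnd' : (γ ++ B :: C :: a :: b :: A :: δ).Nodup :=
            ((reach_perm hζn).nodup_iff).mp hnd
          obtain ⟨α'', β'', heq, hmv⟩ :=
            win_pos2_fwd hba hAB hBC hnd' (good_reach hG hζn)
          exact ⟨α'', β'', by simpa using heq, reach_trans hζn hmv⟩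
      · obtain ⟨γ, δ, A, B, C, hAB, hBC, rfl, he⟩ := hbk
        rcases split3 (by simpa using he) with ⟨ρ, rfl, rfl⟩ | ⟨ρ, rfl, rfl⟩ |
          ⟨rfl, rfl⟩ | ⟨rfl, rfl⟩
        · refine ⟨γ ++ B :: C :: A :: ρ, β', by simp, ?_⟩
          have h2 := reach_bwd γ (ρ ++ a :: b :: β') hAB hBC
          simp only [List.cons_append, List.append_assoc, List.nil_append] at hζ h2 ⊢
          exact reach_trans hζ h2
        · refine ⟨α', ρ ++ B :: C :: A :: δ, by simp, ?_⟩
          have h2 := reach_bwd (α' ++ a :: b :: ρ) δ hAB hBC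
          simp only [List.cons_append, List.append_assoc, List.nil_append] at hζ h2 ⊢
          exact reach_trans hζ h2
        · -- window pos1, backward : α'++β' = γ ++ [C,A,B] ++ δ
          have hζn : Reach (α ++ a :: b :: β) (γ ++ C :: a :: b :: A :: B :: δ) := by
            simpa using hζ
          have hnd' : (γ ++ C :: a :: b :: A :: B :: δ).Nodup :=
            ((reach_perm hζn).nodup_iff).mp hnd
          obtain ⟨α'', β'', heq, hmv⟩ :=
            win_pos1_bwd hba hAB hBC hnd' (good_reach hG hζn)
          exact ⟨α'', β'', by simpa using heq, reach_trans hζn hmv⟩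
        · -- window pos2, backward
          have hζn : Reach (α ++ a :: b :: β) (γ ++ C :: A :: a :: b :: B :: δ) := by
            simpa using hζ
          have hnd' : (γ ++ C :: A :: a :: b :: B :: δ).Nodup :=
            ((reach_perm hζn).nodup_iff).mp hnd
          obtain ⟨α'', β'', heq, hmv⟩ :=
            win_pos2_bwd hba hAB hBC hnd' (good_reach hG hζn)
          exact ⟨α'', β'', by simpa using heq, reach_trans hζn hmv⟩
  -- 321 lifting
  intro z hz h321
  obtain ⟨α', β', rfl, hζ⟩ := sim z hz
  obtain ⟨γ, δ, c1, c2, c3, he, h21, h32⟩ := h321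
  rcases split3 (by simpa using he) with ⟨ρ, rfl, rfl⟩ | ⟨ρ, rfl, rfl⟩ |
    ⟨rfl, rfl⟩ | ⟨rfl, rfl⟩
  · exact absurd (has321_of γ (ρ ++ a :: b :: β') h21 h32)
      (by simpa using good_not321 (good_reach hG hζ))
  · exact absurd (has321_of (α' ++ a :: b :: ρ) δ h21 h32)
      (by simpa using good_not321 (good_reach hG hζ))
  · -- W1 : ζ = γ ++ c1 :: a :: b :: c2 :: c3 :: δ
    have hζn : Reach (α ++ a :: b :: β) (γ ++ c1 :: a :: b :: c2 :: c3 :: δ) := by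
      simpa using hζ
    have hnd' : (γ ++ c1 :: a :: b :: c2 :: c3 :: δ).Nodup :=
      ((reach_perm hζn).nodup_iff).mp hnd
    obtain ⟨h1a, h1b, h12, h13, hab', ha2, ha3, hb2, hb3, h23⟩ := nodup5 hnd'
    have hGζ := good_reach hG hζn
    rcases lt_or_gt_of_ne hb2 with h1 | h1
    · -- b < c2
      rcases lt_or_gt_of_ne h1a with h2 | h2
      · -- c1 < a : move then 321 (c1,c2,c3)
        have m1 : Reach (γ ++ c1 :: a :: b :: c2 :: c3 :: δ)
            (γ ++ a :: b :: c1 :: c2 :: c3 :: δ) := by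
          simpa using reach_fwd γ (c2 :: c3 :: δ) (show b < c1 by omega) h2
        exact absurd (has321_of (γ ++ [a, b]) δ h21 h32 :
            Has321 (γ ++ [a, b] ++ c1 :: c2 :: c3 :: δ))
          (by simpa using good_not321 (good_reach hGζ m1))
      · -- a < c1 : 321 (c1, a, b)
        exact absurd (has321_of γ (c2 :: c3 :: δ) h2 hba) (good_not321 hGζ)
    · -- c2 < b : 321 (b, c2, c3)
      exact absurd (has321_of (γ ++ [c1, a]) δ h1 h32 :
          Has321 (γ ++ [c1, a] ++ b :: c2 :: c3 :: δ))
        (by simpa using good_not321 hGζ)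
  · -- W2 : ζ = γ ++ c1 :: c2 :: a :: b :: c3 :: δ
    have hζn : Reach (α ++ a :: b :: β) (γ ++ c1 :: c2 :: a :: b :: c3 :: δ) := by
      simpa using hζ
    have hnd' : (γ ++ c1 :: c2 :: a :: b :: c3 :: δ).Nodup :=
      ((reach_perm hζn).nodup_iff).mp hnd
    obtain ⟨h12, h1a, h1b, h13, h2a, h2b, h23, hab', ha3, hb3⟩ := nodup5 hnd'
    have hGζ := good_reach hG hζn
    rcases lt_or_gt_of_ne hb3 with h1 | h1
    · -- b < c3
      rcases lt_or_gt_of_ne h2a with h2 | h2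
      · -- c2 < a : move
        have m1 : Reach (γ ++ c1 :: c2 :: a :: b :: c3 :: δ)
            (γ ++ c1 :: a :: b :: c2 :: c3 :: δ) := by
          simpa using reach_fwd (γ ++ [c1]) (c3 :: δ) (show b < c2 by omega) h2
        rcases lt_or_gt_of_ne h1a with h3 | h3
        · -- c1 < a : second move then 321
          have m2 : Reach (γ ++ c1 :: a :: b :: c2 :: c3 :: δ)
              (γ ++ a :: b :: c1 :: c2 :: c3 :: δ) := by
            simpa using reach_fwd γ (c2 :: c3 :: δ) (show b < c1 by omega) h3
          exact absurd (has321_of (γ ++ [a, b]) δ h21 h32 :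
              Has321 (γ ++ [a, b] ++ c1 :: c2 :: c3 :: δ))
            (by simpa using good_not321 (good_reach hGζ (m1.trans m2)))
        · -- a < c1 : 321 (c1, a, b)
          exact absurd (has321_of γ (c2 :: c3 :: δ) h3 hba)
            (good_not321 (good_reach hGζ m1))
      · -- a < c2 : 321 (c2, a, b)
        exact absurd (has321_of (γ ++ [c1]) (c3 :: δ) h2 hba :
            Has321 (γ ++ [c1] ++ c2 :: a :: b :: c3 :: δ))
          (by simpa using good_not321 hGζ)
    · -- c3 < b : 321 (a, b, c3)
      exact absurd (has321_of (γ ++ [c1, c2]) δ hba h1 :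
          Has321 (γ ++ [c1, c2] ++ a :: b :: c3 :: δ))
        (by simpa using good_not321 hGζ)

end SEC6

section SEC7

/-- bubble a small letter leftward through an ascending run -/
lemma bubble {y d c : ℤ} : ∀ (t γ δ : List ℤ), y < d → d < c →
    (∀ e ∈ t, y < e ∧ e < c) →
    Reach (γ ++ d :: (t ++ c :: y :: δ)) (γ ++ c :: y :: d :: (t ++ δ)) := by
  intro t
  induction t using List.reverseRecOn with
  | nil =>
    intro γ δ hyd hdc _
    simpa using reach_fwd γ δ hyd hdc
  | append_singleton t e ih =>
    intro γ δ hyd hdc hmem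
    have hye : y < e := (hmem e (by simp)).1
    have hec : e < c := (hmem e (by simp)).2
    have m1 : Reach (γ ++ d :: ((t ++ [e]) ++ c :: y :: δ))
        (γ ++ d :: (t ++ c :: y :: e :: δ)) := by
      have := reach_fwd (γ ++ d :: t) δ hye hec
      simp only [List.cons_append, List.append_assoc, List.nil_append] at this ⊢
      exact this
    have m2 := ih γ (e :: δ) hyd hdc (fun f hf => hmem f (by simp [hf]))
    have : Reach (γ ++ d :: (t ++ c :: y :: e :: δ)) (γ ++ c :: y :: d :: ((t ++ [e]) ++ δ)) := by
      simp only [List.cons_append, List.append_assoc, List.nil_append] at m2 ⊢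
      exact m2
    exact m1.trans this

/-- comparing the two decompositions of m -/
lemma pfx {m u v u₂ : List ℤ} {a₂ b₂ : ℤ} {v₂ : List ℤ}
    (h1 : m = u ++ v) (h2 : m = u₂ ++ a₂ :: b₂ :: v₂)
    (hch : List.IsChain (· ≤ ·) u) (hba : b₂ < a₂) :
    (u = u₂ ++ [a₂] ∧ v = b₂ :: v₂) ∨
    (∃ t, u₂ = u ++ t ∧ v = t ++ a₂ :: b₂ :: v₂) := by
  have h := h1.symm.trans h2
  rcases List.append_eq_append_iff.mp h with ⟨ρ, hu₂, hv⟩ | ⟨ρ, hu, hv⟩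
  · exact Or.inr ⟨ρ, hu₂, hv⟩
  · -- u = u₂ ++ ρ, a₂ :: b₂ :: v₂ = ρ ++ v
    rcases ρ with _ | ⟨x1, ρ⟩
    · refine Or.inr ⟨[], by simpa using hu.symm, by simpa using hv.symm⟩
    · obtain ⟨e1, hv⟩ := (List.cons.injEq _ _ _ _).mp hv.symm
      rcases ρ with _ | ⟨x2, ρ⟩
      · exact Or.inl ⟨by rw [hu, e1], by simpa using hv⟩
      · obtain ⟨e2, hv⟩ := (List.cons.injEq _ _ _ _).mp hv
        exfalso
        -- u contains a₂ :: b₂ adjacent, contradicting the chain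
        have : a₂ ≤ b₂ := by
          subst hu e1 e2
          have := List.isChain_iff_pairwise.mp hch
          have h' := (List.pairwise_append.mp this).2.1
          simp at h'
          exact h'.1.1
        omega

end SEC7

section SEC8

lemma chain_le_last {u : List ℤ} {a : ℤ} (h : List.IsChain (· ≤ ·) (u ++ [a])) :
    ∀ e ∈ u, e ≤ a := by
  have hp := List.isChain_iff_pairwise.mp h
  have := (List.pairwise_append.mp hp).2.2
  intro e he
  exact this e he a (by simp)

lemma crux_aux : ∀ (n : ℕ) (w : List ℤ), w.length = n →
    ∀ {u : List ℤ} {a b : ℤ} {v : List ℤ},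
    Good w → w.Nodup → w = u ++ a :: b :: v → b < a →
    List.IsChain (· ≤ ·) (u ++ [a]) →
    ∀ {x y : ℤ}, (x, y) ∈ ndes (u ++ v) → x < a → y < b → y ∈ u := by
  intro n
  induction n using Nat.strong_induction_on with
  | _ n ih =>
    intro w hn u a b v hG hnd hw hba hch x y hm hxa hyb
    have hne : ndes (u ++ v) ≠ ∅ := by
      intro h; rw [h] at hm; exact absurd hm (Finset.notMem_empty _)
    obtain ⟨u₂, a₂, b₂, v₂, hs₂⟩ := sfd_none_of_ndes_ne hne
    obtain ⟨e1, e2, e3⟩ := sfd_spec hs₂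
    rw [ndes_eq hs₂] at hm
    have hchu : List.IsChain (· ≤ ·) u := (List.isChain_append.mp hch).1
    rcases pfx rfl e1 hchu e2 with ⟨hu, hv⟩ | ⟨t, hu₂, hv⟩
    · -- boundary case : u = u₂ ++ [a₂], v = b₂ :: v₂
      have hwx : w = u₂ ++ a₂ :: a :: b :: b₂ :: v₂ := by
        rw [hw, hu, hv]; simp
      rcases Finset.mem_insert.mp hm with h | h
      · -- (x, y) = (a₂, b₂) : then y = b₂ < b gives an immediate 321
        have hy : y = b₂ := ((Prod.mk.injEq _ _ _ _).mp h).2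
        exfalso
        exact absurd (has321_of (u₂ ++ [a₂]) v₂ hba (hy ▸ hyb) :
            Has321 (u₂ ++ [a₂] ++ a :: b :: b₂ :: v₂))
          (by rw [hwx] at hG; simpa using good_not321 hG)
      · -- (x, y) ∈ ndes (u₂ ++ v₂)
        have hbb₂ : b ≠ b₂ := by
          have hsub : ([b, b₂] : List ℤ).Sublist w := by
            rw [hwx]
            refine List.Sublist.trans ?_ (List.sublist_append_right u₂ _)
            exact List.sublist_cons_of_sublist a₂ (List.sublist_cons_of_sublist a
              (List.cons_sublist_cons.mpr (List.cons_sublist_cons.mpr (List.nil_sublist _))))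
          have := hsub.nodup hnd
          simpa using this
        rcases lt_or_gt_of_ne hbb₂ with hlt | hgt
        · -- b < b₂ : build w₃ and recurse
          have ha₂a : a₂ ≤ a := chain_le_last hch a₂ (by rw [hu]; simp)
          have hmv : Reach (u₂ ++ a₂ :: b₂ :: a :: b :: v₂) w := by
            rw [hwx]
            simpa using reach_fwd (u₂ ++ [a₂]) v₂ hlt (by omega)
          have hrw : Reach w (u₂ ++ a₂ :: b₂ :: a :: b :: v₂) := reach_symm hmv
          have hG₃ : Good (u₂ ++ a₂ :: b₂ :: a :: b :: v₂) := good_reach hG hrw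
          have hnd₃ : (u₂ ++ a₂ :: b₂ :: a :: b :: v₂).Nodup :=
            ((reach_perm hrw).nodup_iff).mp hnd
          have hG₂ : Good (u₂ ++ a :: b :: v₂) := adjDel e2 hnd₃ hG₃
          have hnd₂ : (u₂ ++ a :: b :: v₂).Nodup :=
            (mid_sublist u₂ a₂ b₂ (a :: b :: v₂)).nodup hnd₃
          have hch₂ : List.IsChain (· ≤ ·) (u₂ ++ [a]) := by
            have hch' : List.IsChain (· ≤ ·) ((u₂ ++ [a₂]) ++ [a]) := hu ▸ hch
            rw [List.isChain_iff_pairwise] at hch' ⊢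
            refine hch'.sublist ?_
            rw [show u₂ ++ [a₂] ++ [a] = u₂ ++ ([a₂] ++ [a]) by simp]
            exact List.Sublist.append_left
              (List.sublist_cons_of_sublist a₂ (List.Sublist.refl [a])) u₂
          have hlen : (u₂ ++ a :: b :: v₂).length < n := by
            subst hn; rw [hwx]
            simp only [List.length_append, List.length_cons]; omega
          have := ih _ hlen _ rfl hG₂ hnd₂ rfl hba hch₂ h hxa hyb
          rw [hu]
          exact List.mem_append_left [a₂] this
        · -- b₂ < b : immediate 321
          exfalso
          exact absurd (has321_of (u₂ ++ [a₂]) v₂ hba hgt :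
              Has321 (u₂ ++ [a₂] ++ a :: b :: b₂ :: v₂))
            (by rw [hwx] at hG; simpa using good_not321 hG)
    · -- inside case : u₂ = u ++ t, v = t ++ a₂ :: b₂ :: v₂
      subst hu₂; subst hv
      have hwx : w = u ++ a :: b :: (t ++ a₂ :: b₂ :: v₂) := hw
      -- b is smaller than every element of t, and b < a₂
      have hbt : (∀ e ∈ t, b < e) ∧ b < a₂ := by
        rcases t with _ | ⟨v₁, t'⟩
        · -- t = [] : a₂ directly after b
          refine ⟨by simp, ?_⟩
          have hne' : b ≠ a₂ := by
            have hsub : ([b, a₂] : List ℤ).Sublist w := by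
              rw [hwx]
              refine List.Sublist.trans ?_ (List.sublist_append_right u _)
              exact List.sublist_cons_of_sublist a
                (List.cons_sublist_cons.mpr (List.cons_sublist_cons.mpr (List.nil_sublist _)))
            have := hsub.nodup hnd
            simpa using this
          rcases lt_or_gt_of_ne hne' with hlt | hgt
          · exact hlt
          · exfalso
            exact absurd (has321_of u (b₂ :: v₂) hba hgt :
                Has321 (u ++ a :: b :: a₂ :: b₂ :: v₂))
              (by rw [hwx] at hG; simpa using good_not321 hG)
        · -- t = v₁ :: t'
          have hbv₁ : b < v₁ := by
            have hne' : b ≠ v₁ := by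
              have hsub : ([b, v₁] : List ℤ).Sublist w := by
                rw [hwx]
                refine List.Sublist.trans ?_ (List.sublist_append_right u _)
                exact List.sublist_cons_of_sublist a
                  (List.cons_sublist_cons.mpr (List.cons_sublist_cons.mpr (List.nil_sublist _)))
              have := hsub.nodup hnd
              simpa using this
            rcases lt_or_gt_of_ne hne' with hlt | hgt
            · exact hlt
            · exfalso
              exact absurd (has321_of u (t' ++ a₂ :: b₂ :: v₂) hba hgt :
                  Has321 (u ++ a :: b :: v₁ :: (t' ++ a₂ :: b₂ :: v₂)))
                (by rw [hwx] at hG; simpa using good_not321 hG)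
          have hcht : List.IsChain (· ≤ ·) ((v₁ :: t') ++ [a₂]) := by
            have : List.IsChain (· ≤ ·) ((u ++ (v₁ :: t')) ++ [a₂]) := e3
            rw [List.append_assoc] at this
            exact (List.isChain_append.mp this).2.1
          have hpw := List.isChain_iff_pairwise.mp hcht
          have hpc := (List.pairwise_cons.mp
            (show List.Pairwise (· ≤ ·) (v₁ :: (t' ++ [a₂])) by simpa using hpw)).1
          constructor
          · intro e he
            rcases List.mem_cons.mp he with rfl | he
            · omega
            · have : v₁ ≤ e := hpc e (List.mem_append_left _ he)
              omega
          · have : v₁ ≤ a₂ := hpc a₂ (by simp)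
            omega
      rcases Finset.mem_insert.mp hm with h | h
      · -- (x, y) = (a₂, b₂) : bubble then 321
        exfalso
        have hx : x = a₂ := ((Prod.mk.injEq _ _ _ _).mp h).1
        have hy : y = b₂ := ((Prod.mk.injEq _ _ _ _).mp h).2
        have hta₂ : ∀ e ∈ t, e < a₂ := by
          intro e he
          have hle : e ≤ a₂ := by
            have : List.IsChain (· ≤ ·) (t ++ [a₂]) := by
              have : List.IsChain (· ≤ ·) ((u ++ t) ++ [a₂]) := e3
              rw [List.append_assoc] at this
              exact (List.isChain_append.mp this).2.1
            exact chain_le_last this e he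
          have hne' : e ≠ a₂ := by
            intro hE
            have hsubnd : (t ++ a₂ :: b₂ :: v₂).Nodup := by
              have hsub : (t ++ a₂ :: b₂ :: v₂).Sublist w := by
                rw [hwx]
                refine List.Sublist.trans ?_ (List.sublist_append_right u _)
                exact List.sublist_cons_of_sublist a (List.sublist_cons_of_sublist b
                  (List.Sublist.refl _))
              exact hsub.nodup hnd
            have := (List.nodup_append.mp hsubnd).2.2
            exact this e he a₂ (by simp) hE
          omega
        have hb₂b : b₂ < b := hy ▸ hyb
        have ha₂a : a₂ < a := hx ▸ hxa
        have hreach : Reach w ((u ++ [a]) ++ a₂ :: b₂ :: b :: (t ++ v₂)) := by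
          have := bubble t (u ++ [a]) v₂ hb₂b hbt.2
            (fun e he => ⟨by have := hbt.1 e he; omega, hta₂ e he⟩)
          rw [hwx]
          simp only [List.cons_append, List.append_assoc, List.nil_append] at this ⊢
          exact this
        exact absurd (has321_of u (b :: (t ++ v₂)) ha₂a e2 :
            Has321 (u ++ a :: a₂ :: b₂ :: b :: (t ++ v₂)))
          (by
            have := good_not321 (good_reach hG hreach)
            simpa using this)
      · -- (x, y) ∈ ndes ((u ++ t) ++ v₂), use adjDel at the adjacent pair
        have hG₂ : Good (u ++ a :: b :: (t ++ v₂)) := by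
          have h1 : Good ((u ++ a :: b :: t) ++ a₂ :: b₂ :: v₂) := by
            rw [hwx] at hG
            simpa using hG
          have h2 : ((u ++ a :: b :: t) ++ a₂ :: b₂ :: v₂).Nodup := by
            rw [hwx] at hnd
            simpa using hnd
          have := adjDel e2 h2 h1
          simpa using this
        have hnd₂ : (u ++ a :: b :: (t ++ v₂)).Nodup := by
          have : (u ++ a :: b :: (t ++ v₂)).Sublist w := by
            rw [hwx]
            refine List.Sublist.append_left ?_ u
            refine List.cons_sublist_cons.mpr (List.cons_sublist_cons.mpr ?_)
            exact List.Sublist.append_left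
              (List.sublist_cons_of_sublist a₂ (List.sublist_cons_of_sublist b₂
                (List.Sublist.refl v₂))) t
          exact this.nodup hnd
        have hlen : (u ++ a :: b :: (t ++ v₂)).length < n := by
          subst hn; rw [hwx]
          simp only [List.length_append, List.length_cons]; omega
        have hm' : (x, y) ∈ ndes (u ++ (t ++ v₂)) := by
          rw [← List.append_assoc]; exact h
        exact ih _ hlen _ rfl hG₂ hnd₂ rfl hba hch hm' hxa hyb

end SEC8

section SEC9

lemma main_aux : ∀ (n : ℕ) (w : List ℤ), w.length = n → Good w → w.Nodup →
    ∀ {x y x' y' : ℤ}, (x, y) ∈ ndes w → (x', y') ∈ ndes w → x < x' → y < y' →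
    ([y, x'] : List ℤ).Sublist w := by
  intro n
  induction n using Nat.strong_induction_on with
  | _ n ih =>
    intro w hn hG hnd x y x' y' hp hp' hxx hyy
    have hne : ndes w ≠ ∅ := by
      intro h; rw [h] at hp; exact absurd hp (Finset.notMem_empty _)
    obtain ⟨u, a, b, v, hs⟩ := sfd_none_of_ndes_ne hne
    obtain ⟨e1, e2, e3⟩ := sfd_spec hs
    rw [ndes_eq hs] at hp hp'
    rcases Finset.mem_insert.mp hp with h | h
    · have hx : x = a := ((Prod.mk.injEq _ _ _ _).mp h).1
      have hy : y = b := ((Prod.mk.injEq _ _ _ _).mp h).2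
      rcases Finset.mem_insert.mp hp' with h' | h'
      · -- both are the top pair : contradiction with x < x'
        have hx' : x' = a := ((Prod.mk.injEq _ _ _ _).mp h').1
        rw [hx, hx'] at hxx
        exact absurd hxx (lt_irrefl a)
      · -- (x,y) = (a,b), (x',y') deeper : x' ∈ v
        have hx'm : x' ∈ u ++ v := (ndes_sub h').1.subset (by simp)
        have hx'v : x' ∈ v := by
          rcases List.mem_append.mp hx'm with hin | hin
          · exact absurd (chain_le_last e3 x' hin) (by omega)
          · exact hin
        subst hy
        rw [e1]
        have h1 : ([y, x'] : List ℤ).Sublist (y :: v) :=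
          List.cons_sublist_cons.mpr (List.singleton_sublist.mpr hx'v)
        have h2 : (y :: v).Sublist (u ++ a :: y :: v) := by
          refine List.Sublist.trans ?_ (List.sublist_append_right u _)
          exact List.sublist_cons_of_sublist a (List.Sublist.refl _)
        exact h1.trans h2
    · rcases Finset.mem_insert.mp hp' with h' | h'
      · -- (x', y') = (a, b) : the crux
        have hx' : x' = a := ((Prod.mk.injEq _ _ _ _).mp h').1
        have hy' : y' = b := ((Prod.mk.injEq _ _ _ _).mp h').2
        have hyu : y ∈ u :=
          crux_aux n w hn hG hnd e1 e2 e3 h (hx' ▸ hxx) (hy' ▸ hyy)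
        subst hx'
        rw [e1]
        have h1 : ([y, x'] : List ℤ).Sublist (u ++ [x']) :=
          List.Sublist.append (List.singleton_sublist.mpr hyu) (List.Sublist.refl [x'])
        refine h1.trans ?_
        refine List.Sublist.append_left ?_ u
        exact List.cons_sublist_cons.mpr (List.sublist_cons_of_sublist b (List.nil_sublist v))
      · -- both deeper : induction
        have hGm : Good (u ++ v) := by
          rw [e1] at hG hnd
          exact adjDel e2 hnd hG
        have hndm : (u ++ v).Nodup := by
          rw [e1] at hnd
          exact (mid_sublist u a b v).nodup hnd
        have hlen : (u ++ v).length < n := by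
          subst hn; rw [e1]
          simp only [List.length_append, List.length_cons]; omega
        have := ih _ hlen _ rfl hGm hndm h h' hxx hyy
        rw [e1]
        exact this.trans (mid_sublist u a b v)

end SEC9

/-- Let `w` be a partial permutation in a well-nested family, and
`i, j, k, l` indices with `(w_i, w_j), (w_k, w_l) ∈ NDes(w)`, `w_i < w_k` and
`w_j < w_l`.  Then `i < j < k < l`. -/
theorem stmt12 (E : Set (List ℤ)) (hE : WellNested E) (w : List ℤ) (hw : w ∈ E)
    (i j k l : ℕ) (hi : i < w.length) (hj : j < w.length) (hk : k < w.length)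
    (hl : l < w.length)
    (hij : (w.get ⟨i, hi⟩, w.get ⟨j, hj⟩) ∈ ndes w)
    (hkl : (w.get ⟨k, hk⟩, w.get ⟨l, hl⟩) ∈ ndes w)
    (h1 : w.get ⟨i, hi⟩ < w.get ⟨k, hk⟩) (h2 : w.get ⟨j, hj⟩ < w.get ⟨l, hl⟩) :
    i < j ∧ j < k ∧ k < l := by
  have hG : Good w := good_of_wellNested hE hw
  have hnd : w.Nodup := hE.1 w hw
  have hs1 : ([w.get ⟨i, hi⟩, w.get ⟨j, hj⟩] : List ℤ).Sublist w := (ndes_sub hij).1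
  have hs2 : ([w.get ⟨k, hk⟩, w.get ⟨l, hl⟩] : List ℤ).Sublist w := (ndes_sub hkl).1
  have hs3 : ([w.get ⟨j, hj⟩, w.get ⟨k, hk⟩] : List ℤ).Sublist w :=
    main_aux w.length w rfl hG hnd hij hkl h1 h2
  exact ⟨idx_lt_of_pair_sublist w hnd hs1 i j hi hj rfl rfl,
    idx_lt_of_pair_sublist w hnd hs3 j k hj hk rfl rfl,
    idx_lt_of_pair_sublist w hnd hs2 k l hk hl rfl rfl⟩
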